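/- Let n, p be positive integers, let M ∈ ℝ^{n×n} be symmetric, and let U ∈ ℝ^{n×p} have unit-norm rows (i.e., diag(U Uᵀ) = 𝟏). Set S(U) := M − ddiag(M U Uᵀ). Assume S(U)·U = 0 and that ⟨S(U), Ů Ůᵀ⟩ ≥ 0 for every Ů ∈ ℝ^{n×p} with diag(U Ůᵀ + Ů Uᵀ) = 0. Then for every z ∈ ℝⁿ: ⟨S(U), (p − 2)·z zᵀ + D_z (U Uᵀ)^{∘2} D_z⟩ ≥ 0, where D_z := diag(z) and (U Uᵀ)^{∘2} is the entrywise square of U Uᵀ. -/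
import Mathlib


open Matrix Filter Finset
open scoped Classical

noncomputable section

/-- Frobenius inner product `⟨A, B⟩ = tr(Bᵀ A)` of real square matrices. -/
def mip {d : ℕ} (A B : Matrix (Fin d) (Fin d) ℝ) : ℝ := (Bᵀ * A).trace

/-- Squared Frobenius norm of a real matrix. -/
def frobSq {m p : ℕ} (X : Matrix (Fin m) (Fin p) ℝ) : ℝ := ∑ i, ∑ j, (X i j) ^ 2

/-- Squared Euclidean norm of a real vector. -/
def vnormSq {n : ℕ} (v : Fin n → ℝ) : ℝ := ∑ i, (v i) ^ 2

/-- Euclidean norm of a real vector. -/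
def vnorm {n : ℕ} (v : Fin n → ℝ) : ℝ := Real.sqrt (vnormSq v)

/-- Euclidean inner product of real vectors. -/
def vip {n : ℕ} (u v : Fin n → ℝ) : ℝ := ∑ i, u i * v i

/-- `ddiag A` keeps the diagonal of `A`, setting off-diagonal entries to zero. -/
def ddiag {n : ℕ} (A : Matrix (Fin n) (Fin n) ℝ) : Matrix (Fin n) (Fin n) ℝ :=
  Matrix.diagonal fun i => A i i

/-- `rowNorms M` is the vector of Euclidean norms of the rows of `M` (`|M|`). -/
def rowNorms {n k : ℕ} (M : Matrix (Fin n) (Fin k) ℝ) : Fin n → ℝ :=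
  fun i => Real.sqrt (∑ j, (M i j) ^ 2)

/-- Second-order critical points `U` of `min ⟨M, UUᵀ⟩` over the product of unit
spheres satisfy the key inequality used in the PhaseCut landscape analysis
(real case). -/
theorem stmt8 {n p : ℕ} (hn : 0 < n) (hp : 0 < p)
    (M : Matrix (Fin n) (Fin n) ℝ) (hM : M.IsSymm)
    (U : Matrix (Fin n) (Fin p) ℝ) (hU : ∀ i, (U * Uᵀ) i i = 1)
    (S : Matrix (Fin n) (Fin n) ℝ) (hS : S = M - ddiag (M * (U * Uᵀ)))
    -- vanishing Riemannian gradient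
    (h1 : S * U = 0)
    -- Riemannian Hessian PSD on the tangent space
    (h2 : ∀ Udot : Matrix (Fin n) (Fin p) ℝ,
      (∀ i, (U * Udotᵀ + Udot * Uᵀ) i i = 0) → 0 ≤ mip S (Udot * Udotᵀ)) :
    ∀ z : Fin n → ℝ,
      0 ≤ mip S (((p:ℝ) - 2) • Matrix.vecMulVec z z
          + Matrix.diagonal z * Matrix.hadamard (U * Uᵀ) (U * Uᵀ)
            * Matrix.diagonal z) := by
  intro z
  have hrow : ∀ i, ∑ l, U i l * U i l = 1 := by
    intro i
    simpa [Matrix.mul_apply, Matrix.transpose_apply] using hU i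
  set V : Fin p → Matrix (Fin n) (Fin p) ℝ :=
    fun k => Matrix.of fun i l => z i * ((if l = k then (1:ℝ) else 0) - U i k * U i l) with hV
  have htang : ∀ k i, (U * (V k)ᵀ + V k * Uᵀ) i i = 0 := by
    intro k i
    have e : ∑ l, U i l * V k i l = 0 := by
      have h1 : ∀ l, U i l * V k i l
          = z i * ((if l = k then U i k else 0) - U i k * (U i l * U i l)) := by
        intro l; simp only [hV, Matrix.of_apply]
        by_cases h : l = k
        · subst h; simp; ring
        · simp [h]; ring
      simp only [h1]
      rw [← Finset.mul_sum, Finset.sum_sub_distrib, Finset.sum_ite_eq', ← Finset.mul_sum, hrow]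
      simp
    simp only [Matrix.add_apply, Matrix.mul_apply, Matrix.transpose_apply]
    have e2 : ∑ l, V k i l * U i l = 0 := by
      simpa [mul_comm] using e
    rw [e, e2]; ring
  have key : ∀ k i j, ∑ l, V k i l * V k j l
      = z i * z j * (1 - U i k ^ 2 - U j k ^ 2
          + U i k * U j k * ∑ l, U i l * U j l) := by
    intro k i j
    have h1 : ∀ l, V k i l * V k j l
        = z i * z j * ((if l = k then (1 : ℝ) - U i k * U i k - U j k * U j k else 0)
            + U i k * U j k * (U i l * U j l)) := by
      intro l; simp only [hV, Matrix.of_apply]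
      by_cases h : l = k
      · subst h; simp; ring
      · simp [h]; ring
    simp only [h1]
    rw [← Finset.mul_sum, Finset.sum_add_distrib, Finset.sum_ite_eq', ← Finset.mul_sum]
    simp only [Finset.mem_univ, if_true]
    ring
  have hBsum : (((p:ℝ) - 2) • Matrix.vecMulVec z z
          + Matrix.diagonal z * Matrix.hadamard (U * Uᵀ) (U * Uᵀ)
            * Matrix.diagonal z) = ∑ k, V k * (V k)ᵀ := by
    ext i j
    have rhs : (∑ k, V k * (V k)ᵀ) i j = ∑ k, ∑ l, V k i l * V k j l := by
      simp [Matrix.sum_apply, Matrix.mul_apply, Matrix.transpose_apply]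
    rw [rhs]
    simp only [key]
    rw [← Finset.mul_sum]
    have hsum : ∑ k, (1 - U i k ^ 2 - U j k ^ 2 + U i k * U j k * ∑ l, U i l * U j l)
        = (p : ℝ) - 2 + (∑ l, U i l * U j l) * (∑ l, U i l * U j l) := by
      rw [Finset.sum_add_distrib, Finset.sum_sub_distrib, Finset.sum_sub_distrib,
        ← Finset.sum_mul]
      have hi : ∑ k, U i k ^ 2 = 1 := by simpa [sq] using hrow i
      have hj : ∑ k, U j k ^ 2 = 1 := by simpa [sq] using hrow j
      simp [hi, hj, Finset.card_univ]
      ring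
    rw [hsum]
    simp [Matrix.add_apply, Matrix.smul_apply, Matrix.vecMulVec_apply,
      Matrix.diagonal_apply, Matrix.hadamard_apply, Matrix.mul_apply, ite_mul, mul_ite,
      Finset.sum_ite_eq, Finset.sum_ite_eq']
    ring
  rw [hBsum]
  have hlin : mip S (∑ k, V k * (V k)ᵀ) = ∑ k, mip S (V k * (V k)ᵀ) := by
    simp [mip, Matrix.transpose_sum, Finset.sum_mul, Matrix.trace_sum]
  rw [hlin]
  exact Finset.sum_nonneg fun k _ => h2 (V k) (htang k)
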